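/- Let N ≥ 2, let qubit 1 be distinguished, and let Ẽ be a finite set of nonempty subsets of {2,…,N}. Then, as states of all N qubits: |0⟩_1 ⊗ |+⟩^{⊗(N−1)} + |1⟩_1 ⊗ ∏_{ẽ∈Ẽ} C_{ẽ} |+⟩^{⊗(N−1)} = √2 · ∏_{ẽ∈Ẽ} C_{ẽ∪{1}} |+⟩^{⊗N}, and |0⟩_1 ⊗ |+⟩^{⊗(N−1)} − |1⟩_1 ⊗ ∏_{ẽ∈Ẽ} C_{ẽ} |+⟩^{⊗(N−1)} = √2 · Z_1 ∏_{ẽ∈Ẽ} C_{ẽ∪{1}} |+⟩^{⊗N}. -/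

import Mathlib

noncomputable section

/-- The state space of qubits labeled by `ι`: a vector is the family of its
amplitudes in the computational basis `{|x⟩ : x : ι → Bool}`. -/
abbrev QState (ι : Type) := (ι → Bool) → ℂ

/-- The sign `(−1)^{∏_{i∈e} x_i}` of the generalized controlled-Z gate `C_e`
on the basis vector `|x⟩`. -/
def csign {ι : Type} (e : Finset ι) (x : ι → Bool) : ℂ :=
  if ∀ i ∈ e, x i = true then -1 else 1

/-- The generalized controlled-Z gate `C_e`, the diagonal unitary with
`C_e |x⟩ = (−1)^{∏_{i∈e} x_i} |x⟩`. -/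
def Cgate {ι : Type} (e : Finset ι) (ψ : QState ι) : QState ι :=
  fun x => csign e x * ψ x

/-- The Hadamard gate `H_i` on qubit `i`, acting as the identity on all other
qubits. -/
def Hgate {ι : Type} [DecidableEq ι] (i : ι) (ψ : QState ι) : QState ι :=
  fun x => (((Real.sqrt 2)⁻¹ : ℝ) : ℂ) *
    (ψ (Function.update x i false) +
      (if x i = true then -1 else 1) * ψ (Function.update x i true))

/-- The Pauli-X (bit flip) gate `X_i` on qubit `i`. -/
def Xgate {ι : Type} [DecidableEq ι] (i : ι) (ψ : QState ι) : QState ι :=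
  fun x => ψ (Function.update x i (!(x i)))

/-- The generalized CNOT gate with control set `f` and target `t ∉ f`:
it flips bit `t` of `x` exactly when `∏_{j∈f} x_j = 1`. -/
def CNOTgate {ι : Type} [DecidableEq ι] (f : Finset ι) (t : ι) (ψ : QState ι) : QState ι :=
  fun x => ψ (if ∀ j ∈ f, x j = true then Function.update x t (!(x t)) else x)

/-- `|+⟩^{⊗n}`, the uniform superposition `2^{−n/2} ∑_x |x⟩`. -/
def plusAll (ι : Type) [Fintype ι] : QState ι :=
  fun _ => (((Real.sqrt 2)⁻¹ : ℝ) : ℂ) ^ (Fintype.card ι)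

/-- The computational-basis ket `|s⟩`. -/
def zketS {ι : Type} [Fintype ι] [DecidableEq ι] (s : ι → Bool) : QState ι :=
  fun x => if x = s then 1 else 0

/-- The Pauli-X-basis product ket: qubit `i` is `|+⟩` if `s i = false` and
`|−⟩` if `s i = true`, where `|±⟩ = (|0⟩ ± |1⟩)/√2`. -/
def xketS {ι : Type} [Fintype ι] (s : ι → Bool) : QState ι :=
  fun x => ∏ i, ((((Real.sqrt 2)⁻¹ : ℝ) : ℂ) * (if s i && x i then -1 else 1))

/-- Tensor product of a state of the qubits `κ` with a state of the qubits `ι`. -/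
def tensP {κ ι : Type} (φ : QState κ) (u : QState ι) : QState (κ ⊕ ι) :=
  fun x => φ (fun i => x (Sum.inl i)) * u (fun j => x (Sum.inr j))

/-- The partial inner product `(⟨φ|_κ ⊗ I)`, sending a state of the qubits
`κ ⊕ ι` to a state of the remaining qubits `ι`. -/
def pinner {κ ι : Type} [Fintype κ] [DecidableEq κ] (φ : QState κ) (w : QState (κ ⊕ ι)) :
    QState ι :=
  fun y => ∑ b : κ → Bool, (starRingEnd ℂ) (φ b) * w (Sum.elim b y)

/-- Tensor product of a single-qubit state on qubit `i` with a state of the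
remaining qubits. -/
def tensQ {ι : Type} [DecidableEq ι] (i : ι) (φ : Bool → ℂ) (ψ : QState {j : ι // j ≠ i}) :
    QState ι :=
  fun x => φ (x i) * ψ (fun j => x j.1)

/-- The partial inner product over the single qubit `i`. -/
def pinner1 {ι : Type} [DecidableEq ι] (i : ι) (φ : Bool → ℂ) (w : QState ι) :
    QState {j : ι // j ≠ i} :=
  fun y => ∑ b : Bool, (starRingEnd ℂ) (φ b) * w (fun j => if h : j = i then b else y ⟨j, h⟩)

/-- The hypergraph state `∏_{e∈E} C_e |+⟩^{⊗|V|}` of the hypergraph `(V, E)`. -/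
def hgState {ι : Type} [Fintype ι] (E : Finset (Finset ι)) : QState ι :=
  fun x => (∏ e ∈ E, csign e x) * plusAll ι x

/-- Sequential composition (operator product) of a list of operators. -/
def seqComp {α : Type} (fs : List (α → α)) : α → α := fs.foldr (· ∘ ·) id
/-- With qubit 1 modeled by `Sum.inl ()` and the remaining
`N−1 ≥ 1` qubits by a finite type `ι`, for any finite set `Ẽ` of nonempty
subsets of the remaining qubits:
`|0⟩₁ ⊗ |+⟩^{⊗(N−1)} + |1⟩₁ ⊗ ∏_{ẽ∈Ẽ} C_ẽ |+⟩^{⊗(N−1)}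
  = √2 · ∏_{ẽ∈Ẽ} C_{ẽ∪{1}} |+⟩^{⊗N}` and
`|0⟩₁ ⊗ |+⟩^{⊗(N−1)} − |1⟩₁ ⊗ ∏_{ẽ∈Ẽ} C_ẽ |+⟩^{⊗(N−1)}
  = √2 · Z₁ ∏_{ẽ∈Ẽ} C_{ẽ∪{1}} |+⟩^{⊗N}`. -/

lemma csign_insert_inl {ι : Type} [DecidableEq ι] (e : Finset ι)
    (x : (Unit ⊕ ι) → Bool) :
    csign (insert (Sum.inl ()) (e.map ⟨Sum.inr, Sum.inr_injective⟩ : Finset (Unit ⊕ ι))) x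
      = if x (Sum.inl ()) then csign e (fun i => x (Sum.inr i)) else 1 := by
  unfold csign
  by_cases h1 : x (Sum.inl ()) = true
  · simp only [h1, if_true]
    congr 1
    simp only [eq_iff_iff]
    constructor
    · intro h i hi
      exact h (Sum.inr i) (Finset.mem_insert_of_mem (Finset.mem_map_of_mem _ hi))
    · intro h i hi
      rcases Finset.mem_insert.1 hi with rfl | hi
      · exact h1
      · obtain ⟨j, hj, rfl⟩ := Finset.mem_map.1 hi
        exact h j hj
  · simp only [Bool.not_eq_true] at h1
    simp only [h1, Bool.false_eq_true, if_false]
    rw [if_neg]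
    intro h
    have := h (Sum.inl ()) (Finset.mem_insert_self _ _)
    rw [h1] at this
    exact Bool.false_ne_true this

lemma sqrt2_pow_card {ι : Type} [Fintype ι] :
    (Real.sqrt 2 : ℂ) * (((Real.sqrt 2)⁻¹ : ℝ) : ℂ) ^ (Fintype.card (Unit ⊕ ι))
      = (((Real.sqrt 2)⁻¹ : ℝ) : ℂ) ^ (Fintype.card ι) := by
  have h2 : ((Real.sqrt 2 : ℝ) : ℂ) ≠ 0 := by
    simp [Real.sqrt_eq_zero']
  rw [Fintype.card_sum, Fintype.card_unit, add_comm, pow_add, pow_one]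
  push_cast
  field_simp

theorem expansion_merging_rule {ι : Type} [Fintype ι] [DecidableEq ι]
    (hN : 1 ≤ Fintype.card ι)
    (Et : Finset (Finset ι)) (hEt : ∀ e ∈ Et, e.Nonempty) :
    (tensP (zketS (fun _ : Unit => false)) (plusAll ι)
      + tensP (zketS (fun _ : Unit => true))
          (fun x => (∏ e ∈ Et, csign e x) * plusAll ι x)
      = (Real.sqrt 2 : ℂ) • (fun x : (Unit ⊕ ι) → Bool =>
          (∏ e ∈ Et,
            csign (insert (Sum.inl ())
              (e.map ⟨Sum.inr, Sum.inr_injective⟩ : Finset (Unit ⊕ ι))) x) *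
          plusAll (Unit ⊕ ι) x)) ∧
    (tensP (zketS (fun _ : Unit => false)) (plusAll ι)
      - tensP (zketS (fun _ : Unit => true))
          (fun x => (∏ e ∈ Et, csign e x) * plusAll ι x)
      = (Real.sqrt 2 : ℂ) • (fun x : (Unit ⊕ ι) → Bool =>
          csign ({Sum.inl ()} : Finset (Unit ⊕ ι)) x *
          ((∏ e ∈ Et,
            csign (insert (Sum.inl ())
              (e.map ⟨Sum.inr, Sum.inr_injective⟩ : Finset (Unit ⊕ ι))) x) *
          plusAll (Unit ⊕ ι) x))) := by
  have key : ∀ (x : (Unit ⊕ ι) → Bool),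
      (∏ e ∈ Et, csign (insert (Sum.inl ())
          (e.map ⟨Sum.inr, Sum.inr_injective⟩ : Finset (Unit ⊕ ι))) x)
        = if x (Sum.inl ()) then ∏ e ∈ Et, csign e (fun i => x (Sum.inr i)) else 1 := by
    intro x
    by_cases h1 : x (Sum.inl ()) = true
    · simp [csign_insert_inl, h1]
    · simp only [Bool.not_eq_true] at h1
      simp [csign_insert_inl, h1]
  have h2 : (Real.sqrt 2 : ℂ) ≠ 0 := Complex.ofReal_ne_zero.mpr (by positivity)
  have hc : Fintype.card (Unit ⊕ ι) = Fintype.card ι + 1 := by simp [add_comm]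
  constructor <;> funext x <;>
    simp only [tensP, zketS, plusAll, Pi.add_apply, Pi.sub_apply, Pi.smul_apply,
      smul_eq_mul, key, hc] <;>
    cases h1 : x (Sum.inl ()) <;>
    simp [h1, funext_iff, csign, pow_succ] <;>
    push_cast <;>
    field_simp <;>
    ring
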